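/- If 0 < x_1 < x_2 < ... < x_{n+1} < 1, then the determinant of the Bernstein–Vandermonde matrix is strictly positive. -/

import Mathlib

/-- If 0 < x_1 < ... < x_{n+1} < 1 then the Bernstein–Vandermonde determinant is positive. -/
theorem bernstein_vandermonde_det_pos (n : ℕ) (x : Fin (n + 1) → ℝ)
    (hx : ∀ i, 0 < x i ∧ x i < 1) (hmono : StrictMono x)
    (A : Matrix (Fin (n + 1)) (Fin (n + 1)) ℝ)
    (hA : ∀ i j, A i j = (n.choose j : ℝ) * (1 - x i) ^ (n - (j : ℕ)) * x i ^ (j : ℕ)) :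
    0 < A.det := by
  have h1 : ∀ i, 0 < 1 - x i := fun i => by linarith [(hx i).2]
  set t : Fin (n + 1) → ℝ := fun i => x i / (1 - x i) with ht
  set B : Matrix (Fin (n + 1)) (Fin (n + 1)) ℝ :=
    Matrix.of fun i j => (fun j : Fin (n + 1) => (n.choose j : ℝ)) j *
      (Matrix.vandermonde t) i j with hB
  have hAeq : A = Matrix.of fun i j => (fun i => (1 - x i) ^ n) i * B i j := by
    ext i j
    rw [hA]
    simp only [Matrix.of_apply, Matrix.vandermonde_apply, hB, ht, div_pow]
    have hj : (j : ℕ) ≤ n := Fin.is_le j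
    have hne : (1 - x i) ^ (j : ℕ) ≠ 0 := pow_ne_zero _ (ne_of_gt (h1 i))
    have hpow : (1 - x i) ^ n = (1 - x i) ^ (n - (j : ℕ)) * (1 - x i) ^ (j : ℕ) := by
      rw [← pow_add, Nat.sub_add_cancel hj]
    rw [hpow]
    field_simp
  have hBdet : B.det = (∏ j : Fin (n + 1), (n.choose j : ℝ)) * (Matrix.vandermonde t).det :=
    Matrix.det_mul_row _ _
  rw [hAeq, Matrix.det_mul_column, hBdet, Matrix.det_vandermonde]
  have htmono : StrictMono t := by
    intro i j hij
    have h1i := h1 i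
    have h1j := h1 j
    have hxij := hmono hij
    rw [ht]
    rw [div_lt_div_iff₀ h1i h1j]
    nlinarith
  apply mul_pos
  · exact Finset.prod_pos fun i _ => pow_pos (h1 i) n
  apply mul_pos
  · exact Finset.prod_pos fun j _ => by
      exact_mod_cast Nat.cast_pos.mpr (Nat.choose_pos (Fin.is_le j))
  · exact Finset.prod_pos fun i _ => Finset.prod_pos fun j hj => by
      have : i < j := Finset.mem_Ioi.mp hj
      exact sub_pos.mpr (htmono this)
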